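/- Let K be a compact Hausdorff topological group and let H be a proper subgroup of K that is G_δ-dense in K (that is, H meets every nonempty G_δ-subset of K). Then H is not Haar-measurable. -/

import Mathlib

open MeasureTheory Pointwise

/-- A subset `D` of a topological space is `Gδ`-dense if it meets every nonempty
`Gδ`-subset. -/
def GDeltaDense {X : Type*} [TopologicalSpace X] (D : Set X) : Prop :=
  ∀ A : Set X, IsGδ A → A.Nonempty → (D ∩ A).Nonempty

theorem stmt11 (K : Type*) [Group K] [TopologicalSpace K] [IsTopologicalGroup K]
    [CompactSpace K] [T2Space K] [MeasurableSpace K] [BorelSpace K]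
    (μ : Measure K) [μ.IsHaarMeasure] (hμ : μ Set.univ = 1)
    (H : Subgroup K) (hHproper : H ≠ ⊤) (hHdense : GDeltaDense (H : Set K)) :
    ¬ NullMeasurableSet (H : Set K) μ := by
  intro hNM
  by_cases hpos : 0 < μ (H : Set K)
  · -- Positive measure case: Steinhaus theorem shows `H` is open, hence closed,
    -- and its complement is a nonempty open (hence Gδ) set missing `H`.
    obtain ⟨t, htH, ht_meas, ht_ae⟩ := hNM.exists_measurable_subset_ae_eq
    have hμt : μ t = μ (H : Set K) := measure_congr ht_ae
    have h1 : (t / t : Set K) ∈ nhds (1 : K) :=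
      MeasureTheory.Measure.div_mem_nhds_one_of_haar_pos μ t ht_meas (hμt ▸ hpos)
    have hsub : (t / t : Set K) ⊆ (H : Set K) := by
      rintro x ⟨a, ha, b, hb, rfl⟩
      exact H.div_mem (htH ha) (htH hb)
    have hopen : IsOpen (H : Set K) :=
      Subgroup.isOpen_of_mem_nhds H (Filter.mem_of_superset h1 hsub)
    have hcl : IsClosed (H : Set K) := Subgroup.isClosed_of_isOpen H hopen
    obtain ⟨g, hg⟩ : ∃ g, g ∉ H := by
      by_contra hc
      push_neg at hc
      refine hHproper ?_
      ext x
      simp [hc x]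
    obtain ⟨x, hx1, hx2⟩ := hHdense (H : Set K)ᶜ hcl.isOpen_compl.isGδ ⟨g, hg⟩
    exact hx2 hx1
  · -- Null case: the complement has full measure; by inner regularity it contains
    -- a compact closed set of positive measure, whose everywhere-positive subset
    -- is a nonempty Gδ set disjoint from `H`, contradicting Gδ-density.
    have hH0 : μ (H : Set K) = 0 := by
      simpa using (not_lt.1 hpos)
    set B := toMeasurable μ (H : Set K) with hBdef
    have hB0 : μ B = 0 := by
      rw [hBdef, measure_toMeasurable]; exact hH0
    have hB_meas : MeasurableSet B := measurableSet_toMeasurable μ _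
    have hBc_pos : 0 < μ Bᶜ := by
      have : μ Bᶜ = 1 := by
        rw [measure_compl hB_meas (by
          exact (measure_lt_top μ B).ne), hB0, hμ, tsub_zero]
      rw [this]; exact one_pos
    obtain ⟨k, hk_sub, ⟨k_comp, k_closed⟩, hk_pos⟩ :=
      MeasureTheory.innerRegularWRT_isCompact_isClosed_measure_ne_top_of_group (μ := μ)
        ⟨hB_meas.compl, (measure_lt_top μ Bᶜ).ne⟩ 0 hBc_pos
    set L := μ.everywherePosSubset k with hLdef
    have L_comp : IsCompact L := k_comp.everywherePosSubset
    have L_closed : IsClosed L := k_closed.everywherePosSubset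
    have hLk : μ L = μ k :=
      measure_congr (MeasureTheory.Measure.everywherePosSubset_ae_eq k_closed.measurableSet)
    have L_ne : L.Nonempty := by
      apply MeasureTheory.nonempty_of_measure_ne_zero (μ := μ)
      rw [hLk]
      exact hk_pos.ne'
    have L_Gδ : IsGδ L :=
      (MeasureTheory.Measure.isEverywherePos_everywherePosSubset
        k_closed.measurableSet).IsGdelta_of_isMulLeftInvariant L_comp L_closed
    obtain ⟨x, hxH, hxL⟩ := hHdense L L_Gδ L_ne
    exact (hk_sub (MeasureTheory.Measure.everywherePosSubset_subset μ k hxL))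
      (subset_toMeasurable μ _ hxH)
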